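/- For the unit n-cube Cₙ = [0,1]ⁿ with vertex set V (the 2ⁿ points with coordinates in {0,1}), the rule L(f) = (2/3)f(1/2,…,1/2) + (1/(3·2ⁿ))·Σ_{P∈V} f(P) satisfies L(f) = ∫_{Cₙ} f dV for every polynomial f of total degree ≤ 3. -/

import Mathlib

open MeasureTheory MvPolynomial

/-- The unit n-cube [0,1]ⁿ. -/
def Cube (n : ℕ) : Set (Fin n → ℝ) := {v | ∀ i, v i ∈ Set.Icc (0:ℝ) 1}

/-- The vertex of the n-cube corresponding to a subset of coordinates, encoded
by a boolean vector. -/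
def cubeVertex (n : ℕ) (s : Fin n → Bool) : Fin n → ℝ :=
  fun i => if s i then 1 else 0

lemma keyS {ι : Type*} (S : Finset ι) (f : ι → ℕ) (h1 : ∀ i ∈ S, 1 ≤ f i)
    (h3 : ∑ i ∈ S, f i ≤ 3) :
    (2/3 : ℝ) * ∏ i ∈ S, ((1:ℝ)/2)^(f i) + (1/3) * ((1:ℝ)/2)^S.card
      = ∏ i ∈ S, (1/((f i : ℝ) + 1)) := by
  classical
  have hcard : S.card ≤ 3 := by
    calc S.card = ∑ i ∈ S, 1 := by simp
    _ ≤ ∑ i ∈ S, f i := Finset.sum_le_sum h1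
    _ ≤ 3 := h3
  have hc : S.card = 0 ∨ S.card = 1 ∨ S.card = 2 ∨ S.card = 3 := by omega
  rcases hc with hc | hc | hc | hc
  · rw [Finset.card_eq_zero] at hc; subst hc; norm_num
  · obtain ⟨a, rfl⟩ := Finset.card_eq_one.mp hc
    simp only [Finset.sum_singleton, Finset.prod_singleton, Finset.card_singleton]
    have ha1 : 1 ≤ f a := h1 a (by simp)
    have ha3 : f a ≤ 3 := by simpa using h3
    set k := f a with hk
    interval_cases k <;> norm_num
  · obtain ⟨a, b, hab, rfl⟩ := Finset.card_eq_two.mp hc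
    rw [Finset.sum_pair hab] at h3
    rw [Finset.prod_pair hab, Finset.prod_pair hab, hc]
    have ha1 : 1 ≤ f a := h1 a (by simp)
    have hb1 : 1 ≤ f b := h1 b (by simp)
    have ha2 : f a ≤ 2 := by omega
    have hb2 : f b ≤ 2 := by omega
    set x := f a with hx
    set y := f b with hy
    have hxy : x + y ≤ 3 := h3
    interval_cases x <;> interval_cases y <;> norm_num at hxy <;> norm_num
  · obtain ⟨a, b, c, hab, hac, hbc, rfl⟩ := Finset.card_eq_three.mp hc
    have hmem : a ∉ ({b, c} : Finset ι) := by simp [hab, hac]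
    have hmem2 : b ∉ ({c} : Finset ι) := by simp [hbc]
    rw [Finset.sum_insert hmem, Finset.sum_insert hmem2, Finset.sum_singleton] at h3
    rw [Finset.prod_insert hmem, Finset.prod_insert hmem2, Finset.prod_singleton,
      Finset.prod_insert hmem, Finset.prod_insert hmem2, Finset.prod_singleton, hc]
    have ha1 : 1 ≤ f a := h1 a (by simp)
    have hb1 : 1 ≤ f b := h1 b (by simp)
    have hc1 : 1 ≤ f c := h1 c (by simp)
    have : f a = 1 ∧ f b = 1 ∧ f c = 1 := by omega
    rw [this.1, this.2.1, this.2.2]; norm_num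

lemma keyU (n : ℕ) (d : Fin n → ℕ) (h : ∑ i, d i ≤ 3) :
    (2/3 : ℝ) * ∏ i, ((1:ℝ)/2)^(d i)
      + (1/(3 * 2^n : ℝ)) * ∏ i, ((1:ℝ)^(d i) + (0:ℝ)^(d i))
      = ∏ i, (1/((d i : ℝ) + 1)) := by
  classical
  set S : Finset (Fin n) := Finset.univ.filter (fun i => ¬ d i = 0) with hS
  have hSmem : ∀ i, i ∈ S ↔ d i ≠ 0 := by intro i; simp [hS]
  have h1 : ∀ i ∈ S, 1 ≤ d i := fun i hi => Nat.one_le_iff_ne_zero.mpr ((hSmem i).mp hi)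
  have h3 : ∑ i ∈ S, d i ≤ 3 := le_trans (Finset.sum_le_sum_of_subset (Finset.subset_univ S)) h
  have e1 : ∏ i, ((1:ℝ)/2)^(d i) = ∏ i ∈ S, ((1:ℝ)/2)^(d i) := by
    rw [eq_comm]
    apply Finset.prod_subset (Finset.subset_univ S)
    intro i _ hi
    have : d i = 0 := by by_contra hne; exact hi ((hSmem i).mpr hne)
    simp [this]
  have e2 : ∏ i, (1/((d i : ℝ) + 1)) = ∏ i ∈ S, (1/((d i : ℝ) + 1)) := by
    rw [eq_comm]
    apply Finset.prod_subset (Finset.subset_univ S)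
    intro i _ hi
    have : d i = 0 := by by_contra hne; exact hi ((hSmem i).mpr hne)
    simp [this]
  have e3 : ∏ i, ((1:ℝ)^(d i) + (0:ℝ)^(d i)) = 2^(n - S.card) := by
    have : ∀ i, ((1:ℝ)^(d i) + (0:ℝ)^(d i)) = if d i = 0 then (2:ℝ) else 1 := by
      intro i
      rcases Nat.eq_zero_or_pos (d i) with h0 | h0
      · rw [h0]; norm_num
      · simp [zero_pow (Nat.pos_iff_ne_zero.mp h0), h0, Nat.pos_iff_ne_zero.mp h0]
    simp_rw [this]
    rw [Finset.prod_ite (fun _ => (2:ℝ)) (fun _ => (1:ℝ))]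
    rw [Finset.prod_const, Finset.prod_const]
    have hpart := Finset.card_filter_add_card_filter_not
      (s := (Finset.univ : Finset (Fin n))) (fun i => d i = 0)
    simp only [Finset.card_univ, Fintype.card_fin] at hpart
    have : (Finset.univ.filter (fun i => d i = 0)).card = n - S.card := by
      rw [hS]; omega
    rw [this]; ring
  have hm : S.card ≤ n := by simpa using Finset.card_le_univ S
  have e4 : (1/(3 * 2^n : ℝ)) * 2^(n - S.card) = (1/3) * ((1:ℝ)/2)^S.card := by
    have h2 : (2:ℝ)^(n - S.card) * 2^(S.card) = 2^n := by
      rw [← pow_add, Nat.sub_add_cancel hm]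
    have hpos : (2:ℝ)^S.card ≠ 0 := by positivity
    have hpos2 : (2:ℝ)^n ≠ 0 := by positivity
    rw [one_div_pow, ← h2]
    field_simp
  rw [e1, e2, e3, e4]
  exact keyS S d h1 h3

lemma cube_eq (n : ℕ) : Cube n = Set.pi Set.univ (fun _ => Set.Icc (0:ℝ) 1) := by
  ext v; simp only [Cube, Set.mem_setOf_eq, Set.mem_pi, Set.mem_univ, true_implies]

lemma cube_measurable (n : ℕ) : MeasurableSet (Cube n) := by
  rw [cube_eq]; exact MeasurableSet.univ_pi fun i => measurableSet_Icc

lemma int_pow_Icc (k : ℕ) : ∫ x in Set.Icc (0:ℝ) 1, x ^ k = 1/((k:ℝ)+1) := by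
  rw [integral_Icc_eq_integral_Ioc, ← intervalIntegral.integral_of_le (by norm_num : (0:ℝ) ≤ 1)]
  rw [integral_pow]
  simp

lemma mono_int (n : ℕ) (d : Fin n → ℕ) :
    ∫ v in Cube n, ∏ i, (v i)^(d i) = ∏ i, (1/((d i : ℝ)+1)) := by
  rw [← integral_indicator (cube_measurable n)]
  have hpt : ∀ v : Fin n → ℝ, (Cube n).indicator (fun v => ∏ i, (v i)^(d i)) v
      = ∏ i, (Set.Icc (0:ℝ) 1).indicator (fun x => x ^ d i) (v i) := by
    intro v
    by_cases hv : v ∈ Cube n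
    · rw [Set.indicator_of_mem hv]
      exact Finset.prod_congr rfl fun i _ => (Set.indicator_of_mem (hv i) _).symm
    · rw [Set.indicator_of_notMem hv]
      obtain ⟨i, hi⟩ : ∃ i, v i ∉ Set.Icc (0:ℝ) 1 := by
        by_contra hcon; push_neg at hcon; exact hv hcon
      rw [eq_comm]
      apply Finset.prod_eq_zero (Finset.mem_univ i)
      simp [Set.indicator_of_notMem hi]
  simp_rw [hpt]
  rw [MeasureTheory.integral_fintype_prod_volume_eq_prod
    (f := fun i x => (Set.Icc (0:ℝ) 1).indicator (fun y => y ^ d i) x)]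
  exact Finset.prod_congr rfl fun i _ => by
    rw [integral_indicator measurableSet_Icc, int_pow_Icc]

theorem stmt_13 (n : ℕ) (p : MvPolynomial (Fin n) ℝ) (hp : p.totalDegree ≤ 3) :
    (2/3 : ℝ) * eval (fun _ => (1/2 : ℝ)) p
      + (1 / (3 * 2^n : ℝ)) * ∑ s : Fin n → Bool, eval (cubeVertex n s) p
      = ∫ v in Cube n, eval v p := by
  classical
  have hcomp : IsCompact (Cube n) := by
    rw [cube_eq]; exact isCompact_univ_pi fun _ => isCompact_Icc
  have hintg : ∀ d : Fin n →₀ ℕ,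
      IntegrableOn (fun v : Fin n → ℝ => coeff d p * ∏ i, v i ^ (d i)) (Cube n) := by
    intro d
    apply ContinuousOn.integrableOn_compact hcomp
    apply Continuous.continuousOn
    exact continuous_const.mul (continuous_finset_prod _ fun i _ => (continuous_apply i).pow _)
  have hdeg : ∀ d ∈ p.support, ∑ i, d i ≤ 3 := by
    intro d hd
    have h1 := MvPolynomial.le_totalDegree hd
    rw [Finsupp.sum_fintype _ _ (fun _ => rfl)] at h1
    exact le_trans h1 hp
  have hrhs : ∫ v in Cube n, eval v p
      = ∑ d ∈ p.support, coeff d p * ∏ i, (1/((d i : ℝ)+1)) := by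
    simp_rw [eval_eq']
    rw [integral_finset_sum _ (fun d _ => hintg d)]
    refine Finset.sum_congr rfl fun d _ => ?_
    rw [MeasureTheory.integral_const_mul, mono_int]
  have hvs : ∀ d : Fin n →₀ ℕ,
      (∑ s : Fin n → Bool, ∏ i, (cubeVertex n s i)^(d i))
        = ∏ i, ((1:ℝ)^(d i) + (0:ℝ)^(d i)) := by
    intro d
    have h := Finset.prod_univ_sum (fun _ : Fin n => (Finset.univ : Finset Bool))
      (fun i b => (if b then (1:ℝ) else 0)^(d i))
    rw [Fintype.piFinset_univ] at h
    simp only [Fintype.sum_bool, if_true, if_false] at h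
    have hc : ∀ (s : Fin n → Bool) (i : Fin n), cubeVertex n s i = if s i = true then (1:ℝ) else 0 := by
      intro s i; rfl
    simp_rw [hc, ← h]
    norm_num
  have hl1 : eval (fun _ => (1/2 : ℝ)) p
      = ∑ d ∈ p.support, coeff d p * ∏ i, ((1:ℝ)/2)^(d i) := by
    rw [eval_eq']
  have hl2 : ∑ s : Fin n → Bool, eval (cubeVertex n s) p
      = ∑ d ∈ p.support, coeff d p * ∏ i, ((1:ℝ)^(d i) + (0:ℝ)^(d i)) := by
    simp_rw [eval_eq']
    rw [Finset.sum_comm]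
    refine Finset.sum_congr rfl fun d _ => ?_
    rw [← Finset.mul_sum, hvs d]
  rw [hl1, hl2, hrhs, Finset.mul_sum, Finset.mul_sum, ← Finset.sum_add_distrib]
  refine Finset.sum_congr rfl fun d hd => ?_
  have hkey := keyU n d (hdeg d hd)
  calc (2/3 : ℝ) * (coeff d p * ∏ i, ((1:ℝ)/2)^(d i))
        + (1/(3*2^n : ℝ)) * (coeff d p * ∏ i, ((1:ℝ)^(d i) + (0:ℝ)^(d i)))
      = coeff d p * ((2/3 : ℝ) * ∏ i, ((1:ℝ)/2)^(d i)
          + (1/(3*2^n : ℝ)) * ∏ i, ((1:ℝ)^(d i) + (0:ℝ)^(d i))) := by ring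
    _ = coeff d p * ∏ i, (1/((d i : ℝ)+1)) := by rw [hkey]
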